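/- Let I be a finite index set and ω : I → ℝ, s : ℝ → I → ℝ differentiable with s_i(x) > 0 and ∑_i s_i(x) = 1, and γ_i > 0 constants. Suppose the portfolio shares satisfy ω_i(x) = γ̄(x)/γ_i where γ̄(x) = (∑_j s_j(x)/γ_j)^{-1}, and define the risk premium RP(x) = γ̄(x)·σ² for a constant σ² > 0. Then RP'(x) = γ̄(x)·σ² · ∑_i s_i'(x)·(1 - ω_i(x)). -/

import Mathlib

theorem stmt6 {ι : Type*} [Fintype ι] (s : ι → ℝ → ℝ) (γ : ι → ℝ) (σ2 : ℝ)
    (hdiff : ∀ i, Differentiable ℝ (s i)) (hpos : ∀ i x, 0 < s i x)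
    (hsum : ∀ x, ∑ i, s i x = 1) (hγ : ∀ i, 0 < γ i) (hσ : 0 < σ2)
    (ω : ι → ℝ → ℝ) (hω : ∀ i x, ω i x = (∑ j, s j x / γ j)⁻¹ / γ i) (x : ℝ) :
    deriv (fun y => (∑ i, s i y / γ i)⁻¹ * σ2) x
      = (∑ i, s i x / γ i)⁻¹ * σ2 * ∑ i, deriv (s i) x * (1 - ω i x) := by
  set g : ℝ → ℝ := fun y => ∑ i, s i y / γ i with hg
  have hgd : Differentiable ℝ g := by
    apply Differentiable.fun_sum
    intro i _
    exact (hdiff i).div_const _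
  have hne : (Finset.univ : Finset ι).Nonempty := by
    apply Finset.nonempty_of_sum_ne_zero (f := fun i => s i x)
    rw [hsum x]; norm_num
  have hgx : 0 < g x := Finset.sum_pos (fun i _ => div_pos (hpos i x) (hγ i)) hne
  have hgne : g x ≠ 0 := ne_of_gt hgx
  have hS : (∑ i, s i x / γ i) = g x := rfl
  have hderivg : deriv g x = ∑ i, deriv (s i) x / γ i := by
    rw [hg]
    rw [deriv_fun_sum (fun i _ => ((hdiff i).div_const _).differentiableAt)]
    congr 1
    ext i
    exact deriv_div_const _
  have hsumderiv : ∑ i, deriv (s i) x = 0 := by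
    have h1 : deriv (fun y => ∑ i, s i y) x = ∑ i, deriv (s i) x :=
      deriv_fun_sum (fun i _ => (hdiff i).differentiableAt)
    have h2 : (fun y => ∑ i, s i y) = fun _ => (1:ℝ) := funext hsum
    rw [h2, deriv_const] at h1
    exact h1.symm
  have hL : deriv (fun y => (g y)⁻¹ * σ2) x = -(deriv g x) / (g x)^2 * σ2 := by
    rw [deriv_mul_const (c := fun y => (g y)⁻¹) ((hgd.differentiableAt.inv hgne))]
    rw [deriv_fun_inv'' hgd.differentiableAt hgne]
  rw [hL]
  have hR : ∑ i, deriv (s i) x * (1 - ω i x)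
      = ∑ i, deriv (s i) x - (g x)⁻¹ * ∑ i, deriv (s i) x / γ i := by
    rw [Finset.mul_sum, ← Finset.sum_sub_distrib]
    congr 1; ext i
    rw [hω, hS]
    field_simp
  rw [hR, hsumderiv, hderivg, hS]
  field_simp
  ring
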